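/- Let D, ℓ ∈ ℕ and let G be a (D,ℓ)-bounded finite graph, i.e., G has at most ℓ nodes of degree greater than D. Then DistToGraph_{D+k, ℓ+k}(G) ≥ k for every k ∈ ℕ ∪ {0}. -/
import Mathlib


/-- A finite graph: a finite vertex set together with a finite set of undirected edges. -/
structure FinGraph where
  verts : Finset ℕ
  edges : Finset (Sym2 ℕ)

namespace FinGraph

/-- A finite graph is valid if every edge is a non-loop both of whose endpoints are vertices. -/
def Valid (G : FinGraph) : Prop :=
  ∀ e ∈ G.edges, ¬ e.IsDiag ∧ ∀ v ∈ e, v ∈ G.verts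

/-- The degree of a vertex: the number of edges containing it. -/
def degree (G : FinGraph) (v : ℕ) : ℕ :=
  (G.edges.filter (fun e => v ∈ e)).card

/-- Remove a node and all of its adjacent edges. -/
def removeNode (G : FinGraph) (v : ℕ) : FinGraph :=
  ⟨G.verts.erase v, G.edges.filter (fun e => v ∉ e)⟩

end FinGraph

/-- One graph is obtained from the other by removing one node and all of its adjacent edges. -/
def nodeNeighborGraph (G G' : FinGraph) : Prop :=
  (∃ v ∈ G.verts, G' = G.removeNode v) ∨ (∃ v ∈ G'.verts, G = G'.removeNode v)

/-- The node distance: the length of a shortest chain of valid graphs from `A` to `B`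
in which consecutive graphs are node-neighboring. -/
noncomputable def graphNodeDist (A B : FinGraph) : ℕ :=
  sInf {n | ∃ f : ℕ → FinGraph, f 0 = A ∧ f n = B ∧ (∀ i ≤ n, (f i).Valid) ∧
    ∀ i < n, nodeNeighborGraph (f i) (f (i + 1))}

/-- `DistToGraph D ℓ G`: the minimum, over all valid finite graphs `H` having at least
`ℓ` nodes of degree greater than `D`, of the node distance between `G` and `H`. -/
noncomputable def DistToGraph (D ℓ : ℕ) (G : FinGraph) : ℕ :=
  sInf {n | ∃ H : FinGraph, H.Valid ∧
    ℓ ≤ (H.verts.filter fun v => D < H.degree v).card ∧ graphNodeDist G H = n}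

/- ### Auxiliary lemmas -/

namespace FinGraph

lemma removeNode_valid {G : FinGraph} (hG : G.Valid) (v : ℕ) : (G.removeNode v).Valid := by
  intro e he
  simp only [removeNode, Finset.mem_filter] at he
  obtain ⟨he1, he2⟩ := he
  refine ⟨(hG e he1).1, fun w hw => ?_⟩
  exact Finset.mem_erase.2 ⟨fun h => he2 (h ▸ hw), (hG e he1).2 w hw⟩

lemma degree_removeNode_le (G : FinGraph) (v w : ℕ) :
    (G.removeNode v).degree w ≤ G.degree w := by
  apply Finset.card_le_card
  intro e he
  simp only [removeNode, Finset.mem_filter] at he ⊢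
  exact ⟨he.1.1, he.2⟩

lemma degree_le_removeNode_add_one (G : FinGraph) {v w : ℕ} (hvw : v ≠ w) :
    G.degree w ≤ (G.removeNode v).degree w + 1 := by
  have hsub : G.edges.filter (fun e => w ∈ e) ⊆
      insert s(v, w) ((G.removeNode v).edges.filter (fun e => w ∈ e)) := by
    intro e he
    simp only [Finset.mem_filter] at he
    by_cases hv : v ∈ e
    · have : e = s(v, w) := (Sym2.mem_and_mem_iff hvw).1 ⟨hv, he.2⟩
      simp [this]
    · simp only [Finset.mem_insert, removeNode, Finset.mem_filter]
      exact Or.inr ⟨⟨he.1, hv⟩, he.2⟩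
  calc G.degree w ≤ _ := Finset.card_le_card hsub
    _ ≤ _ + 1 := Finset.card_insert_le _ _

end FinGraph

/-- The number of vertices of degree greater than `t`. -/
def hiCount (t : ℕ) (X : FinGraph) : ℕ :=
  (X.verts.filter fun v => t < X.degree v).card

lemma hiCount_mono {s t : ℕ} (h : s ≤ t) (X : FinGraph) : hiCount t X ≤ hiCount s X := by
  apply Finset.card_le_card
  intro v hv
  simp only [Finset.mem_filter] at hv ⊢
  exact ⟨hv.1, lt_of_le_of_lt h hv.2⟩

lemma hiCount_step {X X' : FinGraph} (h : nodeNeighborGraph X X') (t : ℕ) :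
    hiCount (t + 1) X' ≤ hiCount t X + 1 := by
  rcases h with ⟨v, hv, rfl⟩ | ⟨v, hv, rfl⟩
  · -- X' = X.removeNode v : degrees only decrease
    have hsub : ((X.removeNode v).verts.filter fun w => t + 1 < (X.removeNode v).degree w) ⊆
        X.verts.filter fun w => t < X.degree w := by
      intro w hw
      simp only [Finset.mem_filter] at hw ⊢
      have hwv : w ∈ X.verts := Finset.mem_of_mem_erase hw.1
      have hdeg := X.degree_removeNode_le v w
      exact ⟨hwv, by omega⟩
    have := Finset.card_le_card hsub
    unfold hiCount
    omega
  · -- X = X'.removeNode v : degrees increase by at most 1, one new vertex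
    have hsub : (X'.verts.filter fun w => t + 1 < X'.degree w) ⊆
        insert v ((X'.removeNode v).verts.filter fun w => t < (X'.removeNode v).degree w) := by
      intro w hw
      simp only [Finset.mem_filter] at hw
      by_cases hwv : w = v
      · simp [hwv]
      · refine Finset.mem_insert.2 (Or.inr (Finset.mem_filter.2 ⟨?_, ?_⟩))
        · exact Finset.mem_erase_of_ne_of_mem hwv hw.1
        · have := X'.degree_le_removeNode_add_one (v := v) (w := w) (fun h => hwv h.symm)
          omega
    calc hiCount (t + 1) X' ≤ _ := Finset.card_le_card hsub
      _ ≤ _ + 1 := Finset.card_insert_le _ _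

lemma chain_count {f : ℕ → FinGraph} {n : ℕ}
    (hstep : ∀ i < n, nodeNeighborGraph (f i) (f (i + 1))) :
    ∀ j ≤ n, ∀ t, hiCount (t + j) (f j) ≤ hiCount t (f 0) + j := by
  intro j
  induction j with
  | zero => intro _ t; simp
  | succ j ih =>
    intro hj t
    have h1 := hiCount_step (hstep j (by omega)) (t + j)
    have h2 := ih (by omega) t
    have e : t + (j + 1) = t + j + 1 := rfl
    rw [e]
    omega

lemma nodeNeighbor_symm {A B : FinGraph} (h : nodeNeighborGraph A B) :
    nodeNeighborGraph B A := h.symm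

lemma chain_to_empty : ∀ n (G : FinGraph), G.verts.card = n → G.Valid →
    ∃ f : ℕ → FinGraph, f 0 = G ∧ f n = ⟨∅, ∅⟩ ∧ (∀ i ≤ n, (f i).Valid) ∧
      ∀ i < n, nodeNeighborGraph (f i) (f (i + 1)) := by
  intro n
  induction n with
  | zero =>
    intro G hcard hG
    have hv : G.verts = ∅ := Finset.card_eq_zero.1 hcard
    have he : G.edges = ∅ := by
      by_contra h
      obtain ⟨e, hemem⟩ := Finset.nonempty_iff_ne_empty.2 h
      obtain ⟨x, hx⟩ : ∃ x, x ∈ e := ⟨e.out.1, Sym2.out_fst_mem e⟩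
      have := (hG e hemem).2 x hx
      simp [hv] at this
    have hGe : G = ⟨∅, ∅⟩ := by
      cases G with
      | mk a b => simp_all
    exact ⟨fun _ => G, rfl, hGe, fun _ _ => hG, fun i h => (Nat.not_lt_zero i h).elim⟩
  | succ n ih =>
    intro G hcard hG
    have hpos : 0 < G.verts.card := by omega
    obtain ⟨v, hv⟩ := Finset.card_pos.1 hpos
    have hcard' : (G.removeNode v).verts.card = n := by
      simp only [FinGraph.removeNode]
      rw [Finset.card_erase_of_mem hv, hcard]
      omega
    obtain ⟨f, hf0, hfn, hfval, hfstep⟩ :=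
      ih (G.removeNode v) hcard' (FinGraph.removeNode_valid hG v)
    refine ⟨fun i => if i = 0 then G else f (i - 1), by simp, by simp [hfn], ?_, ?_⟩
    · intro i _
      by_cases h : i = 0
      · simpa [h] using hG
      · simp only [if_neg h]
        exact hfval _ (by omega)
    · intro i hi
      by_cases h : i = 0
      · subst h
        simp only [if_pos rfl, if_neg one_ne_zero]
        have h1 : f (1 - 1) = G.removeNode v := by simpa using hf0
        rw [h1]
        exact Or.inl ⟨v, hv, rfl⟩
      · simp only [if_neg h, if_neg (by omega : i + 1 ≠ 0)]
        have h1 : i + 1 - 1 = (i - 1) + 1 := by omega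
        rw [h1]
        exact hfstep (i - 1) (by omega)

lemma chain_exists (A B : FinGraph) (hA : A.Valid) (hB : B.Valid) :
    ∃ n, ∃ f : ℕ → FinGraph, f 0 = A ∧ f n = B ∧ (∀ i ≤ n, (f i).Valid) ∧
      ∀ i < n, nodeNeighborGraph (f i) (f (i + 1)) := by
  obtain ⟨f, hf0, hfa, hfval, hfstep⟩ := chain_to_empty A.verts.card A rfl hA
  obtain ⟨g, hg0, hgb, hgval, hgstep⟩ := chain_to_empty B.verts.card B rfl hB
  set a := A.verts.card with ha
  set b := B.verts.card with hb
  refine ⟨a + b, fun i => if i ≤ a then f i else g (a + b - i), by simp [hf0], ?_, ?_, ?_⟩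
  · show (if a + b ≤ a then f (a + b) else g (a + b - (a + b))) = B
    by_cases h : a + b ≤ a
    · have hb0 : b = 0 := by omega
      rw [hb0] at hgb
      rw [if_pos h, show a + b = a by omega, hfa, ← hgb, hg0]
    · rw [if_neg h, show a + b - (a + b) = 0 by omega, hg0]
  · intro i hi
    by_cases h : i ≤ a
    · simp only [if_pos h]; exact hfval i h
    · simp only [if_neg h]; exact hgval _ (by omega)
  · intro i hi
    show nodeNeighborGraph (if i ≤ a then f i else g (a + b - i))
      (if i + 1 ≤ a then f (i + 1) else g (a + b - (i + 1)))
    by_cases h : i + 1 ≤ a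
    · simp only [if_pos h, if_pos (by omega : i ≤ a)]
      exact hfstep i (by omega)
    · have hia : a ≤ i := by omega
      have hkey : (if i ≤ a then f i else g (a + b - i)) = g (a + b - i) := by
        by_cases h2 : i ≤ a
        · have : i = a := le_antisymm h2 hia
          subst this
          simp only [if_pos le_rfl]
          have : a + b - a = b := by omega
          rw [this, hfa, hgb]
        · simp only [if_neg h2]
      rw [hkey]
      simp only [if_neg h]
      have h1 : a + b - i = (a + b - (i + 1)) + 1 := by omega
      rw [h1]
      exact nodeNeighbor_symm (hgstep (a + b - (i + 1)) (by omega))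

lemma graphNodeDist_chain (A B : FinGraph) (hA : A.Valid) (hB : B.Valid) :
    ∃ f : ℕ → FinGraph, f 0 = A ∧ f (graphNodeDist A B) = B ∧
      (∀ i ≤ graphNodeDist A B, (f i).Valid) ∧
      ∀ i < graphNodeDist A B, nodeNeighborGraph (f i) (f (i + 1)) := by
  have hne : {n | ∃ f : ℕ → FinGraph, f 0 = A ∧ f n = B ∧ (∀ i ≤ n, (f i).Valid) ∧
      ∀ i < n, nodeNeighborGraph (f i) (f (i + 1))}.Nonempty := by
    obtain ⟨n, f, h⟩ := chain_exists A B hA hB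
    exact ⟨n, f, h⟩
  exact Nat.sInf_mem hne

/-- Complete graph on `{0, …, m-1}`. -/
def compG (m : ℕ) : FinGraph :=
  ⟨Finset.range m, (Finset.range m).sym2.filter fun e => ¬ e.IsDiag⟩

lemma compG_valid (m : ℕ) : (compG m).Valid := by
  intro e he
  simp only [compG, Finset.mem_filter, Finset.mem_sym2_iff] at he
  exact ⟨he.2, he.1⟩

lemma compG_degree {m v : ℕ} (hv : v ∈ Finset.range m) :
    m - 1 ≤ (compG m).degree v := by
  have hsub : ((Finset.range m).erase v).image (fun w => s(v, w)) ⊆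
      (compG m).edges.filter fun e => v ∈ e := by
    intro e he
    simp only [Finset.mem_image] at he
    obtain ⟨w, hw, rfl⟩ := he
    have hwv : w ≠ v := (Finset.mem_erase.1 hw).1
    simp only [Finset.mem_filter, compG, Finset.mem_sym2_iff]
    refine ⟨⟨?_, ?_⟩, ?_⟩
    · intro y hy
      rcases Sym2.mem_iff.1 hy with rfl | rfl
      · exact hv
      · exact (Finset.mem_erase.1 hw).2
    · simp only [Sym2.isDiag_iff_proj_eq]
      exact fun h => hwv h.symm
    · exact Sym2.mem_mk_left v w
  have hinj : Set.InjOn (fun w => s(v, w)) ((Finset.range m).erase v) := by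
    intro x hx y hy hxy
    simp only [Sym2.eq, Sym2.rel_iff', Prod.mk.injEq, Prod.swap_prod_mk] at hxy
    rcases hxy with ⟨-, h⟩ | ⟨h1, h2⟩
    · exact h
    · exact absurd h2 (Finset.mem_erase.1 hx).1
  calc m - 1 = ((Finset.range m).erase v).card := by
        rw [Finset.card_erase_of_mem hv, Finset.card_range]
    _ = (((Finset.range m).erase v).image (fun w => s(v, w))).card :=
        (Finset.card_image_of_injOn hinj).symm
    _ ≤ _ := Finset.card_le_card hsub

/-- If `G` is a `(D, ℓ)`-bounded valid finite graph (at most `ℓ` nodes of degree greater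
than `D`), then `DistToGraph_{D+k, ℓ+k}(G) ≥ k` for every `k ∈ ℕ`. -/
theorem distToGraph_of_bounded (D ℓ : ℕ) (G : FinGraph) (hG : G.Valid)
    (hbdd : (G.verts.filter fun v => D < G.degree v).card ≤ ℓ) (k : ℕ) :
    k ≤ DistToGraph (D + k) (ℓ + k) G := by
  set m := D + ℓ + 2 * k + 2 with hm
  have hHcount : ℓ + k ≤ ((compG m).verts.filter fun v => D + k < (compG m).degree v).card := by
    have heq : (compG m).verts.filter (fun v => D + k < (compG m).degree v) = (compG m).verts := by
      apply Finset.filter_true_of_mem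
      intro v hv
      have hd := compG_degree (m := m) (v := v) hv
      omega
    rw [heq]
    simp only [compG, Finset.card_range]
    omega
  have hSne : {n | ∃ H : FinGraph, H.Valid ∧
      ℓ + k ≤ (H.verts.filter fun v => D + k < H.degree v).card ∧
      graphNodeDist G H = n}.Nonempty :=
    ⟨graphNodeDist G (compG m), compG m, compG_valid m, hHcount, rfl⟩
  have hmem := Nat.sInf_mem hSne
  obtain ⟨H, hHv, hHc, hHd⟩ := hmem
  obtain ⟨f, hf0, hfn, hfval, hfstep⟩ := graphNodeDist_chain G H hG hHv
  rw [show DistToGraph (D + k) (ℓ + k) G = graphNodeDist G H from hHd.symm]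
  by_contra hlt
  push_neg at hlt
  set n := graphNodeDist G H with hn
  have hcc := chain_count hfstep n le_rfl (D + k - n)
  have he : D + k - n + n = D + k := by omega
  rw [he, hf0, hfn] at hcc
  have h1 : hiCount (D + k - n) G ≤ hiCount D G := hiCount_mono (by omega) G
  have h2 : hiCount D G ≤ ℓ := hbdd
  have h3 : ℓ + k ≤ hiCount (D + k) H := hHc
  omega
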